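/- For all positive integers n, the Bernoulli number satisfies B_n = - sum_{k=1}^{n} (n/k) * S(n-1, k-1) * B_k^*, where B_k^* is the k-th Bernoulli number of the second kind. -/

import Mathlib

open Finset

/-- Stirling numbers of the second kind. -/
def stirling2 : ℕ → ℕ → ℕ
  | 0, 0 => 1
  | 0, _ + 1 => 0
  | _ + 1, 0 => 0
  | n + 1, k + 1 => stirling2 n k + (k + 1) * stirling2 n (k + 1)

/-- Signed Stirling numbers of the first kind. -/
def stirling1 : ℕ → ℕ → ℤ
  | 0, 0 => 1
  | 0, _ + 1 => 0
  | n + 1, 0 => -(n : ℤ) * stirling1 n 0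
  | n + 1, k + 1 => stirling1 n k - (n : ℤ) * stirling1 n (k + 1)

/-- Bernoulli numbers of the second kind: `∫₀¹ x(x-1)⋯(x-n+1) dx`. -/
noncomputable def bernoulliStar (n : ℕ) : ℝ :=
  ∫ x in (0:ℝ)..1, (descPochhammer ℝ n).eval x

lemma stirling2_eq_zero : ∀ {m j : ℕ}, m < j → stirling2 m j = 0 := by
  intro m
  induction m with
  | zero =>
    rintro (_ | j) h
    · omega
    · rfl
  | succ m ih =>
    rintro (_ | j) h
    · omega
    · show stirling2 m j + (j + 1) * stirling2 m (j + 1) = 0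
      rw [ih (by omega), ih (by omega), mul_zero, add_zero]

lemma stirling_eval (m : ℕ) (x : ℚ) :
    x ^ m = ∑ j ∈ range (m + 1), (stirling2 m j : ℚ) * (descPochhammer ℚ j).eval x := by
  induction m with
  | zero => simp [stirling2]
  | succ m ih =>
    have key : ∀ j : ℕ, x * (descPochhammer ℚ j).eval x =
        (descPochhammer ℚ (j + 1)).eval x + j * (descPochhammer ℚ j).eval x := by
      intro j
      rw [descPochhammer_succ_eval]
      ring
    calc x ^ (m + 1) = x * x ^ m := by ring
      _ = ∑ j ∈ range (m + 1), (stirling2 m j : ℚ) * (descPochhammer ℚ (j + 1)).eval x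
          + ∑ j ∈ range (m + 1), ((j : ℚ) * stirling2 m j) * (descPochhammer ℚ j).eval x := by
        rw [ih, Finset.mul_sum, ← Finset.sum_add_distrib]
        refine Finset.sum_congr rfl fun j _ => ?_
        rw [show x * ((stirling2 m j : ℚ) * (descPochhammer ℚ j).eval x)
            = (stirling2 m j : ℚ) * (x * (descPochhammer ℚ j).eval x) by ring, key j]
        ring
      _ = ∑ j ∈ range (m + 1), (stirling2 m j : ℚ) * (descPochhammer ℚ (j + 1)).eval x
          + ∑ i ∈ range (m + 1), (((i : ℚ) + 1) * stirling2 m (i + 1))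
              * (descPochhammer ℚ (i + 1)).eval x := by
        congr 1
        rw [Finset.sum_range_succ' (fun j => ((j : ℚ) * stirling2 m j) * (descPochhammer ℚ j).eval x) m,
          Finset.sum_range_succ (fun i => (((i : ℚ) + 1) * stirling2 m (i + 1))
              * (descPochhammer ℚ (i + 1)).eval x) m,
          stirling2_eq_zero (Nat.lt_succ_self m)]
        push_cast
        ring
      _ = ∑ j ∈ range (m + 1 + 1), (stirling2 (m + 1) j : ℚ) * (descPochhammer ℚ j).eval x := by
        rw [Finset.sum_range_succ'
          (fun j => (stirling2 (m + 1) j : ℚ) * (descPochhammer ℚ j).eval x) (m + 1)]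
        rw [show stirling2 (m + 1) 0 = 0 from rfl]
        rw [← Finset.sum_add_distrib]
        refine (Finset.sum_congr rfl fun i _ => ?_).symm.trans (by push_cast; ring)
        rw [show stirling2 (m + 1) (i + 1) = stirling2 m i + (i + 1) * stirling2 m (i + 1) from rfl]
        push_cast
        ring

lemma desc_diff (j : ℕ) (x : ℚ) :
    (descPochhammer ℚ (j + 1)).eval (x + 1) - (descPochhammer ℚ (j + 1)).eval x
      = ((j : ℚ) + 1) * (descPochhammer ℚ j).eval x := by
  have h1 : (descPochhammer ℚ (j + 1)).eval (x + 1) = (x + 1) * (descPochhammer ℚ j).eval x := by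
    rw [descPochhammer_succ_left]
    simp [Polynomial.eval_comp]
  rw [h1, descPochhammer_succ_eval]
  ring

noncomputable def Gpoly (n : ℕ) : Polynomial ℚ :=
  ∑ j ∈ range n, Polynomial.C ((stirling2 (n - 1) j : ℚ) * ((j : ℚ) + 1)⁻¹)
    * descPochhammer ℚ (j + 1)

lemma key_poly (n : ℕ) (hn : 0 < n) :
    Polynomial.C (n : ℚ) * Gpoly n = Polynomial.bernoulli n - Polynomial.C (bernoulli n) := by
  obtain ⟨m, rfl⟩ : ∃ m, n = m + 1 := ⟨n - 1, (Nat.succ_pred_eq_of_pos hn).symm⟩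
  set P : Polynomial ℚ :=
    Polynomial.C ((m : ℚ) + 1) * Gpoly (m + 1)
      - (Polynomial.bernoulli (m + 1) - Polynomial.C (bernoulli (m + 1))) with hP
  have hG : ∀ x : ℚ, (Gpoly (m + 1)).eval (x + 1) - (Gpoly (m + 1)).eval x = x ^ m := by
    intro x
    simp only [Gpoly, Polynomial.eval_finset_sum, Polynomial.eval_mul, Polynomial.eval_C,
      Nat.add_sub_cancel]
    rw [← Finset.sum_sub_distrib]
    rw [Finset.sum_congr rfl (fun j _ => ?_), ← stirling_eval m x]
    rw [← mul_sub, desc_diff]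
    have hj : ((j : ℚ) + 1) ≠ 0 := by positivity
    field_simp
  have hdiff : ∀ x : ℚ, P.eval (x + 1) = P.eval x := by
    intro x
    have hB := Polynomial.bernoulli_eval_one_add (m + 1) x
    rw [add_comm (1 : ℚ) x] at hB
    have hGx := hG x
    simp only [hP, Polynomial.eval_sub, Polynomial.eval_mul, Polynomial.eval_C] at *
    push_cast at hB ⊢
    nlinarith [hB, hGx]
  have h0 : P.eval 0 = 0 := by
    simp [hP, Gpoly, Polynomial.eval_finset_sum, descPochhammer_eval_zero,
      Polynomial.bernoulli_eval_zero]
  have hnat : ∀ k : ℕ, P.eval (k : ℚ) = 0 := by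
    intro k
    induction k with
    | zero => simpa using h0
    | succ k ih => push_cast; rw [hdiff]; exact ih
  have hP0 : P = 0 := by
    refine Polynomial.eq_zero_of_infinite_isRoot P ?_
    exact Set.infinite_of_injective_forall_mem (f := (Nat.cast : ℕ → ℚ))
      Nat.cast_injective (fun k => hnat k)
  have := sub_eq_zero.mp hP0
  push_cast
  push_cast at this
  exact this

lemma key_real (n : ℕ) (hn : 0 < n) (x : ℝ) :
    (n : ℝ) * ∑ j ∈ range n,
        (stirling2 (n - 1) j : ℝ) * ((j : ℝ) + 1)⁻¹ * (descPochhammer ℝ (j + 1)).eval x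
      = ((Polynomial.bernoulli n).map (algebraMap ℚ ℝ)).eval x - (bernoulli n : ℝ) := by
  have h := congrArg (fun p => Polynomial.eval x (Polynomial.map (algebraMap ℚ ℝ) p))
    (key_poly n hn)
  simp only [Polynomial.map_mul, Polynomial.map_sub, Polynomial.map_C, Polynomial.eval_mul,
    Polynomial.eval_sub, Polynomial.eval_C, Gpoly, Polynomial.map_sum,
    descPochhammer_map, Polynomial.eval_finset_sum, map_mul, map_inv₀, map_natCast,
    Polynomial.map_natCast, Polynomial.eval_natCast,
    map_add, map_one, eq_ratCast, Rat.cast_natCast, Rat.cast_add, Rat.cast_one] at h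
  rw [Finset.mul_sum]
  rw [Finset.mul_sum] at h
  convert h using 2 with j hj

lemma bernoulli_integral_zero (n : ℕ) (hn : 0 < n) :
    (∫ x in (0:ℝ)..1, ((Polynomial.bernoulli n).map (algebraMap ℚ ℝ)).eval x) = 0 := by
  set q : Polynomial ℝ :=
    Polynomial.C (((n : ℝ) + 1)⁻¹) * (Polynomial.bernoulli (n + 1)).map (algebraMap ℚ ℝ) with hq
  have hnz : ((n : ℝ) + 1) ≠ 0 := by positivity
  have hd : q.derivative = (Polynomial.bernoulli n).map (algebraMap ℚ ℝ) := by
    rw [hq, Polynomial.derivative_C_mul, Polynomial.derivative_map,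
      Polynomial.derivative_bernoulli_add_one, Polynomial.map_mul]
    rw [show ((n : Polynomial ℚ) + 1) = Polynomial.C ((n : ℚ) + 1) by
      simp [map_add, map_one, Polynomial.C_eq_natCast]]
    rw [Polynomial.map_C, ← mul_assoc, ← Polynomial.C_mul]
    rw [show (algebraMap ℚ ℝ) ((n : ℚ) + 1) = (n : ℝ) + 1 by push_cast; simp]
    rw [inv_mul_cancel₀ hnz, Polynomial.C_1, one_mul]
  have hderiv : ∀ y ∈ Set.uIcc (0:ℝ) 1, HasDerivAt (fun t => q.eval t)
      (((Polynomial.bernoulli n).map (algebraMap ℚ ℝ)).eval y) y := by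
    intro y _
    have := q.hasDerivAt y
    rwa [hd] at this
  rw [intervalIntegral.integral_eq_sub_of_hasDerivAt hderiv
    ((Polynomial.continuous _).intervalIntegrable 0 1)]
  have hB : bernoulli' (n + 1) = bernoulli (n + 1) :=
    (bernoulli_eq_bernoulli'_of_ne_one (by omega)).symm
  have e1 : Polynomial.eval (1:ℝ) ((Polynomial.bernoulli (n+1)).map (algebraMap ℚ ℝ))
      = (bernoulli (n + 1) : ℝ) := by
    rw [Polynomial.eval_one_map, Polynomial.bernoulli_eval_one, hB, eq_ratCast]
  have e0 : Polynomial.eval (0:ℝ) ((Polynomial.bernoulli (n+1)).map (algebraMap ℚ ℝ))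
      = (bernoulli (n + 1) : ℝ) := by
    rw [Polynomial.eval_zero_map, Polynomial.bernoulli_eval_zero, eq_ratCast]
  simp [hq, e1, e0]

theorem stmt1 (n : ℕ) (hn : 0 < n) :
    (bernoulli n : ℝ) =
      - ∑ k ∈ Finset.Icc 1 n, (n : ℝ) / k * (stirling2 (n - 1) (k - 1) : ℝ) * bernoulliStar k := by
  have hcont : ∀ j : ℕ, Continuous fun x : ℝ =>
      (stirling2 (n - 1) j : ℝ) * ((j : ℝ) + 1)⁻¹ * (descPochhammer ℝ (j + 1)).eval x :=
    fun j => continuous_const.mul (Polynomial.continuous _)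
  have hint : ∫ x in (0:ℝ)..1, (n : ℝ) * ∑ j ∈ range n,
        (stirling2 (n - 1) j : ℝ) * ((j : ℝ) + 1)⁻¹ * (descPochhammer ℝ (j + 1)).eval x
      = ∫ x in (0:ℝ)..1,
        (((Polynomial.bernoulli n).map (algebraMap ℚ ℝ)).eval x - (bernoulli n : ℝ)) :=
    intervalIntegral.integral_congr fun x _ => key_real n hn x
  rw [intervalIntegral.integral_const_mul, intervalIntegral.integral_finset_sum
      (fun j _ => (hcont j).intervalIntegrable 0 1),
    intervalIntegral.integral_sub ((Polynomial.continuous _).intervalIntegrable 0 1)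
      intervalIntegrable_const,
    bernoulli_integral_zero n hn, intervalIntegral.integral_const] at hint
  have hstar : ∀ j ∈ range n, (∫ x in (0:ℝ)..1,
        (stirling2 (n - 1) j : ℝ) * ((j : ℝ) + 1)⁻¹ * (descPochhammer ℝ (j + 1)).eval x)
      = (stirling2 (n - 1) j : ℝ) * ((j : ℝ) + 1)⁻¹ * bernoulliStar (j + 1) := by
    intro j _
    rw [intervalIntegral.integral_const_mul]
    rfl
  rw [Finset.sum_congr rfl hstar] at hint
  simp only [zero_sub, smul_eq_mul, sub_zero, one_mul] at hint
  have himg : Finset.Icc 1 n = Finset.image (· + 1) (Finset.range n) := by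
    ext a
    simp only [Finset.mem_Icc, Finset.mem_image, Finset.mem_range]
    constructor
    · rintro ⟨h1, h2⟩; exact ⟨a - 1, by omega, by omega⟩
    · rintro ⟨b, hb, rfl⟩; omega
  rw [himg, Finset.sum_image (fun a _ b _ h => by omega)]
  have hre : ∑ j ∈ range n, (n : ℝ) / ((j + 1 : ℕ) : ℝ) * (stirling2 (n - 1) (j + 1 - 1) : ℝ)
        * bernoulliStar (j + 1)
      = (n : ℝ) * ∑ j ∈ range n,
        (stirling2 (n - 1) j : ℝ) * ((j : ℝ) + 1)⁻¹ * bernoulliStar (j + 1) := by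
    rw [Finset.mul_sum]
    refine Finset.sum_congr rfl fun j _ => ?_
    rw [Nat.add_sub_cancel]
    push_cast
    field_simp
  rw [hre, hint]
  ring
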